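/- arXiv:2403.13027 — 8 statements merged into one kernel-verified Lean document; each statement's English description precedes it below -/
import Mathlib

section
/- For any two probability distributions Q and P on a finite set, the total variation distance satisfies TV(Q,P) ≤ sqrt(1 − exp(−D_kl(Q‖P))) (Bretagnolle–Huber inequality). -/
open Finset Real

/-- KL divergence of finite probability mass functions. -/
noncomputable def KLfin {Ω : Type*} [Fintype Ω] (Q P : Ω → ℝ) : ℝ :=
  ∑ x, Q x * Real.log (Q x / P x)

/-- Bretagnolle–Huber inequality: for probability mass functions `Q ≪ P` on a
finite set, `TV(Q,P) = sup_A |Q(A) − P(A)| ≤ sqrt (1 − exp (−D_kl(Q‖P)))`. -/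
theorem bretagnolle_huber {Ω : Type*} [Fintype Ω]
    (Q P : Ω → ℝ)
    (hQ0 : ∀ x, 0 ≤ Q x) (hQ1 : ∑ x, Q x = 1)
    (hP0 : ∀ x, 0 ≤ P x) (hP1 : ∑ x, P x = 1)
    (hac : ∀ x, P x = 0 → Q x = 0) :
    ∀ A : Finset Ω, |∑ x ∈ A, Q x - ∑ x ∈ A, P x| ≤
      Real.sqrt (1 - Real.exp (-(KLfin Q P))) := by
  intro A
  classical
  set s : Finset Ω := Finset.univ.filter (fun x => Q x ≠ 0) with hs
  have hsQ : ∀ x ∈ s, 0 < Q x := by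
    intro x hx
    rw [hs, Finset.mem_filter] at hx
    exact lt_of_le_of_ne (hQ0 x) (Ne.symm hx.2)
  have hsP : ∀ x ∈ s, 0 < P x := by
    intro x hx
    rcases lt_or_eq_of_le (hP0 x) with h | h
    · exact h
    · exact absurd (hac x h.symm) (Finset.mem_filter.mp hx).2
  have hQs : ∑ x ∈ s, Q x = 1 := by
    rw [hs, Finset.sum_filter_ne_zero, hQ1]
  have hKL : KLfin Q P = ∑ x ∈ s, Q x * Real.log (Q x / P x) := by
    rw [KLfin]
    refine (Finset.sum_subset (Finset.subset_univ s) ?_).symm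
    intro x _ hx
    rw [hs, Finset.mem_filter] at hx
    push_neg at hx
    rw [hx (Finset.mem_univ x), zero_mul]
  -- Jensen step: exp(-KL/2) ≤ ∑_s √(Q x) √(P x)
  have jensen : Real.exp (-(KLfin Q P) / 2) ≤ ∑ x ∈ s, Real.sqrt (Q x) * Real.sqrt (P x) := by
    have h := convexOn_exp.map_sum_le (t := s) (w := Q)
      (p := fun x => Real.log (Real.sqrt (P x / Q x)))
      (fun x _ => hQ0 x) hQs (fun x _ => Set.mem_univ _)
    simp only [smul_eq_mul] at h
    have hsum : ∑ x ∈ s, Q x * Real.log (Real.sqrt (P x / Q x)) = -(KLfin Q P) / 2 := by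
      rw [hKL, ← Finset.sum_neg_distrib, Finset.sum_div]
      apply Finset.sum_congr rfl
      intro x hx
      rw [Real.log_sqrt (le_of_lt (div_pos (hsP x hx) (hsQ x hx))),
        Real.log_div (ne_of_gt (hsP x hx)) (ne_of_gt (hsQ x hx)),
        Real.log_div (ne_of_gt (hsQ x hx)) (ne_of_gt (hsP x hx))]
      ring
    rw [hsum] at h
    refine h.trans (le_of_eq ?_)
    apply Finset.sum_congr rfl
    intro x hx
    rw [Real.exp_log (Real.sqrt_pos.mpr (div_pos (hsP x hx) (hsQ x hx))),
      Real.sqrt_div (hP0 x)]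
    have hq : Real.sqrt (Q x) ≠ 0 := ne_of_gt (Real.sqrt_pos.mpr (hsQ x hx))
    conv_lhs => rw [← Real.mul_self_sqrt (hQ0 x)]
    field_simp
    ring_nf
    rw [Real.sqrt_sq (Real.sqrt_nonneg _)]
    ring
  -- Cauchy-Schwarz with min/max
  set m : ℝ := ∑ x, min (Q x) (P x) with hm
  set M : ℝ := ∑ x, max (Q x) (P x) with hM
  have hm0 : 0 ≤ m := Finset.sum_nonneg fun x _ => le_min (hQ0 x) (hP0 x)
  have hM0 : 0 ≤ M := Finset.sum_nonneg fun x _ => le_trans (hQ0 x) (le_max_left _ _)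
  have hmM : m + M = 2 := by
    rw [hm, hM, ← Finset.sum_add_distrib]
    have : ∀ x : Ω, min (Q x) (P x) + max (Q x) (P x) = Q x + P x := fun x =>
      min_add_max (Q x) (P x)
    rw [Finset.sum_congr rfl fun x _ => this x, Finset.sum_add_distrib, hQ1, hP1]
    norm_num
  have cs : ∑ x ∈ s, Real.sqrt (Q x) * Real.sqrt (P x) ≤ Real.sqrt m * Real.sqrt M := by
    have h1 : ∑ x ∈ s, Real.sqrt (Q x) * Real.sqrt (P x)
        = ∑ x ∈ s, Real.sqrt (min (Q x) (P x)) * Real.sqrt (max (Q x) (P x)) := by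
      apply Finset.sum_congr rfl
      intro x hx
      rw [← Real.sqrt_mul (hQ0 x), ← Real.sqrt_mul (le_min (hQ0 x) (hP0 x)), min_mul_max]
    rw [h1]
    refine (Real.sum_sqrt_mul_sqrt_le s (f := fun x => min (Q x) (P x))
      (g := fun x => max (Q x) (P x)) (fun x => le_min (hQ0 x) (hP0 x))
      (fun x => le_trans (hQ0 x) (le_max_left _ _))).trans ?_
    gcongr
    · exact Finset.sum_le_sum_of_subset_of_nonneg (Finset.subset_univ s)
        (fun x _ _ => le_min (hQ0 x) (hP0 x))
    · exact Finset.sum_le_sum_of_subset_of_nonneg (Finset.subset_univ s)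
        (fun x _ _ => le_trans (hQ0 x) (le_max_left _ _))
  -- exp(-KL) ≤ m * M
  have key : Real.exp (-(KLfin Q P)) ≤ m * M := by
    have h2 : Real.exp (-(KLfin Q P)) = Real.exp (-(KLfin Q P) / 2) ^ 2 := by
      rw [sq, ← Real.exp_add]
      ring_nf
    rw [h2]
    have h3 : Real.exp (-(KLfin Q P) / 2) ^ 2 ≤ (Real.sqrt m * Real.sqrt M) ^ 2 := by
      apply pow_le_pow_left₀ (le_of_lt (Real.exp_pos _))
      exact jensen.trans cs
    refine h3.trans (le_of_eq ?_)
    rw [mul_pow, Real.sq_sqrt hm0, Real.sq_sqrt hM0]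
  -- TV bound: |Q(A) - P(A)| ≤ 1 - m
  have hm1 : m ≤ 1 := by
    rw [hm, ← hQ1]
    exact Finset.sum_le_sum fun x _ => min_le_left _ _
  have tv : |∑ x ∈ A, Q x - ∑ x ∈ A, P x| ≤ 1 - m := by
    rw [abs_sub_le_iff]
    constructor
    · rw [← Finset.sum_sub_distrib, ← hQ1, hm, ← Finset.sum_sub_distrib]
      refine le_trans ?_ (Finset.sum_le_sum_of_subset_of_nonneg (Finset.subset_univ A)
        (fun x _ _ => sub_nonneg.mpr (min_le_left _ _)))
      exact Finset.sum_le_sum fun x _ => sub_le_sub_left (min_le_right _ _) _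
    · rw [← Finset.sum_sub_distrib, ← hP1, hm, ← Finset.sum_sub_distrib]
      refine le_trans ?_ (Finset.sum_le_sum_of_subset_of_nonneg (Finset.subset_univ A)
        (fun x _ _ => sub_nonneg.mpr (min_le_right _ _)))
      exact Finset.sum_le_sum fun x _ => sub_le_sub_left (min_le_left _ _) _
  -- conclude
  have hsq : (1 - m) ^ 2 ≤ 1 - Real.exp (-(KLfin Q P)) := by
    nlinarith [key, hmM]
  calc |∑ x ∈ A, Q x - ∑ x ∈ A, P x| ≤ 1 - m := tv
    _ = Real.sqrt ((1 - m) ^ 2) := (Real.sqrt_sq (by linarith)).symm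
    _ ≤ Real.sqrt (1 - Real.exp (-(KLfin Q P))) := Real.sqrt_le_sqrt hsq
end

section
/- For any two distributions P and Q on a finite set, the sum of the type I and type II errors of any test distinguishing Q from P is at least 1 − sqrt(1 − exp(−D_kl(Q‖P))). In particular, as D_kl(Q‖P) → 0 this lower bound tends to 1. -/
open Finset Real Filter

/-- For any test `ψ : Ω → {0,1}` distinguishing `Q` from `P`, the sum of the
type I error `P(ψ = 1)` and the type II error `Q(ψ = 0)` is at least
`1 − sqrt (1 − exp (−D_kl(Q‖P)))`; moreover this lower bound tends to `1` as
the KL divergence tends to `0`. -/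
theorem error_sum_lower_bound {Ω : Type*} [Fintype Ω]
    (Q P : Ω → ℝ)
    (hQ0 : ∀ x, 0 ≤ Q x) (hQ1 : ∑ x, Q x = 1)
    (hP0 : ∀ x, 0 ≤ P x) (hP1 : ∑ x, P x = 1)
    (hac : ∀ x, P x = 0 → Q x = 0) :
    (∀ ψ : Ω → Bool,
      1 - Real.sqrt (1 - Real.exp (-(KLfin Q P))) ≤
        ∑ x, (if ψ x then P x else Q x)) ∧
    Tendsto (fun d : ℝ => 1 - Real.sqrt (1 - Real.exp (-d)))
      (nhds 0) (nhds 1) := by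
  constructor
  · intro ψ
    set m := ∑ x, min (P x) (Q x) with hm
    set s := ∑ x, Real.sqrt (P x * Q x) with hs
    -- positivity of s
    have hspos : 0 < s := by
      obtain ⟨x, hx⟩ : ∃ x, 0 < Q x := by
        by_contra h
        push_neg at h
        have h0 : ∑ x, Q x = 0 :=
          Finset.sum_eq_zero fun x _ => le_antisymm (h x) (hQ0 x)
        rw [h0] at hQ1; norm_num at hQ1
      have hPx : 0 < P x :=
        (hP0 x).lt_of_ne fun h => by have := hac x h.symm; linarith
      calc 0 < Real.sqrt (P x * Q x) := Real.sqrt_pos.mpr (mul_pos hPx hx)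
        _ ≤ s := Finset.single_le_sum (f := fun y => Real.sqrt (P y * Q y))
            (fun y _ => Real.sqrt_nonneg _) (mem_univ x)
    -- Jensen: exp(-KL) ≤ s^2
    have hKL : Real.exp (-(KLfin Q P)) ≤ s ^ 2 := by
      set t : Finset Ω := Finset.univ.filter fun x => 0 < Q x with ht
      have hQt : ∀ x ∈ t, 0 < Q x := fun x hx => (Finset.mem_filter.mp hx).2
      have hPt : ∀ x ∈ t, 0 < P x := fun x hx =>
        (hP0 x).lt_of_ne fun h => by have := hac x h.symm; have := hQt x hx; linarith
      have hsum1 : ∑ x ∈ t, Q x = 1 := by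
        rw [← hQ1]
        apply Finset.sum_filter_of_ne
        intro x _ hx
        exact (hQ0 x).lt_of_ne (Ne.symm hx)
      have hjensen :=
        strictConcaveOn_log_Ioi.concaveOn.le_map_sum (t := t)
          (w := fun x => Q x) (p := fun x => Real.sqrt (P x / Q x))
          (fun x hx => (hQt x hx).le) hsum1
          (fun x hx => Set.mem_Ioi.mpr (Real.sqrt_pos.mpr (div_pos (hPt x hx) (hQt x hx))))
      have hwt : ∀ x ∈ t, Q x * Real.sqrt (P x / Q x) = Real.sqrt (P x * Q x) := by
        intro x hx
        rw [Real.sqrt_div (hP0 x), Real.sqrt_mul (hP0 x), mul_comm (Q x),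
          div_mul_eq_mul_div, mul_div_assoc, Real.div_sqrt]
      have hKt : ∑ x ∈ t, Q x * Real.log (Q x / P x) = KLfin Q P := by
        rw [KLfin]
        apply Finset.sum_filter_of_ne
        intro x _ hx
        rcases mul_ne_zero_iff.mp hx with ⟨h1, _⟩
        exact (hQ0 x).lt_of_ne (Ne.symm h1)
      have hL : ∑ x ∈ t, Q x • Real.log (Real.sqrt (P x / Q x)) = -(KLfin Q P) / 2 := by
        have hc : ∀ x ∈ t, Q x • Real.log (Real.sqrt (P x / Q x))
            = (-(1 / 2)) * (Q x * Real.log (Q x / P x)) := by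
          intro x hx
          rw [smul_eq_mul, Real.log_sqrt (div_nonneg (hP0 x) (hQt x hx).le),
            show P x / Q x = (Q x / P x)⁻¹ by rw [inv_div], Real.log_inv]
          ring
        rw [Finset.sum_congr rfl hc, ← Finset.mul_sum, hKt]
        ring
      have hR : ∑ x ∈ t, Q x • Real.sqrt (P x / Q x) = s := by
        have hc : ∀ x ∈ t, Q x • Real.sqrt (P x / Q x) = Real.sqrt (P x * Q x) := by
          intro x hx; rw [smul_eq_mul]; exact hwt x hx
        rw [Finset.sum_congr rfl hc, hs]
        apply Finset.sum_filter_of_ne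
        intro x _ hx
        refine (hQ0 x).lt_of_ne fun h => hx ?_
        rw [show P x * Q x = 0 by rw [← h, mul_zero], Real.sqrt_zero]
      rw [hL, hR] at hjensen
      have hle : Real.exp (-(KLfin Q P) / 2) ≤ s := by
        have := Real.exp_le_exp.mpr hjensen
        rwa [Real.exp_log hspos] at this
      calc Real.exp (-(KLfin Q P))
          = Real.exp (-(KLfin Q P) / 2) * Real.exp (-(KLfin Q P) / 2) := by
            rw [← Real.exp_add]; ring_nf
        _ ≤ s * s := mul_le_mul hle hle (Real.exp_pos _).le hspos.le
        _ = s ^ 2 := (sq s).symm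
    -- Cauchy-Schwarz: s^2 ≤ m * (2 - m)
    have hmax : ∑ x, max (P x) (Q x) = 2 - m := by
      have h2 : ∑ x, (min (P x) (Q x) + max (P x) (Q x)) = 2 := by
        simp_rw [min_add_max]
        rw [Finset.sum_add_distrib, hP1, hQ1]; norm_num
      rw [Finset.sum_add_distrib] at h2
      linarith
    have hCS : s ^ 2 ≤ m * (2 - m) := by
      rw [← hmax, hs, hm]
      apply Finset.sum_sq_le_sum_mul_sum_of_sq_eq_mul
      · exact fun x _ => le_min (hP0 x) (hQ0 x) |>.trans (min_le_min le_rfl le_rfl) |>.trans le_rfl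
      · exact fun x _ => le_max_of_le_left (hP0 x)
      · intro x _
        rw [Real.sq_sqrt (mul_nonneg (hP0 x) (hQ0 x)), min_mul_max]
    -- m lower bounds the error sum
    have hmle : m ≤ ∑ x, (if ψ x then P x else Q x) := by
      apply Finset.sum_le_sum
      intro x _
      by_cases h : ψ x <;> simp [h]
    have h1 : (1 - m) ^ 2 ≤ 1 - Real.exp (-(KLfin Q P)) := by nlinarith
    have h2 : 1 - m ≤ Real.sqrt (1 - Real.exp (-(KLfin Q P))) :=
      calc 1 - m ≤ |1 - m| := le_abs_self _
        _ = Real.sqrt ((1 - m) ^ 2) := (Real.sqrt_sq_eq_abs _).symm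
        _ ≤ _ := Real.sqrt_le_sqrt h1
    linarith
  · have hc : Continuous fun d : ℝ => 1 - Real.sqrt (1 - Real.exp (-d)) := by
      continuity
    have := hc.tendsto 0
    simpa using this
end

section
/- Consider a probability vector p on a finite vocabulary V partitioned into a green set and a red set with G = Σ_{k green} p_k and R = 1 − G, both in (0,1). Among all probability vectors q = (r_k p_k)_k with Σ_k r_k p_k = 1 and Σ_{k green} (r_k − 1) p_k ≥ Δ for some 0 < Δ < R, the minimizer of Σ_k r_k p_k log(r_k) has all r_k over green indices equal and all r_k over red indices equal, and the minimum value equals (R−Δ)log((R−Δ)/R) + (G+Δ)log((G+Δ)/G). -/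
open Finset Real


private lemma jensen_part {V : Type*} [Fintype V] (t : Finset V) (p r : V → ℝ)
    (hp : ∀ k ∈ t, 0 < p k) (hr : ∀ k, 0 ≤ r k) (hW : 0 < ∑ k ∈ t, p k) :
    (∑ k ∈ t, r k * p k) * Real.log ((∑ k ∈ t, r k * p k) / (∑ k ∈ t, p k))
      ≤ ∑ k ∈ t, r k * p k * Real.log (r k) ∧
    ((∑ k ∈ t, r k * p k * Real.log (r k)) ≤
      (∑ k ∈ t, r k * p k) * Real.log ((∑ k ∈ t, r k * p k) / (∑ k ∈ t, p k)) →
      ∀ j ∈ t, ∀ k ∈ t, r j = r k) := by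
  set W := ∑ k ∈ t, p k with hWdef
  set M := ∑ k ∈ t, r k * p k with hMdef
  have h₀ : ∀ k ∈ t, 0 < p k / W := fun k hk => div_pos (hp k hk) hW
  have h₁ : ∑ k ∈ t, p k / W = 1 := by rw [← Finset.sum_div]; field_simp; exact hWdef.symm
  have hmem : ∀ k ∈ t, r k ∈ Set.Ici (0 : ℝ) := fun k _ => hr k
  have hav : ∑ k ∈ t, (p k / W) • r k = M / W := by
    rw [hMdef, Finset.sum_div]
    exact Finset.sum_congr rfl fun k hk => by simp [smul_eq_mul]; ring
  have hsum : ∑ k ∈ t, (p k / W) • (r k * Real.log (r k))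
      = (∑ k ∈ t, r k * p k * Real.log (r k)) / W := by
    rw [Finset.sum_div]
    exact Finset.sum_congr rfl fun k hk => by simp [smul_eq_mul]; ring
  constructor
  · have := Real.convexOn_mul_log.map_sum_le (fun k hk => (h₀ k hk).le) h₁ hmem
    rw [hav, hsum] at this
    have h2 : W * ((M / W) * Real.log (M / W))
        ≤ W * ((∑ k ∈ t, r k * p k * Real.log (r k)) / W) := by
      exact mul_le_mul_of_nonneg_left this hW.le
    rw [mul_div_cancel₀ _ hW.ne'] at h2
    calc M * Real.log (M / W) = W * ((M / W) * Real.log (M / W)) := by field_simp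
      _ ≤ _ := h2
  · intro hle
    have hle' : ∑ k ∈ t, (p k / W) • ((fun x => x * Real.log x) (r k))
        ≤ (fun x => x * Real.log x) (∑ k ∈ t, (p k / W) • r k) := by
      rw [hav, hsum]
      simp only
      rw [div_le_iff₀ hW]
      calc (∑ k ∈ t, r k * p k * Real.log (r k))
          ≤ M * Real.log (M / W) := hle
        _ = M / W * Real.log (M / W) * W := by field_simp
    exact fun j hj k hk =>
      Real.strictConvexOn_mul_log.eq_of_le_map_sum h₀ h₁ hmem hle' hj hk

private lemma bin_mono (G R A₀ A : ℝ) (hG : 0 < G) (hR : 0 < R)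
    (h1 : G < A₀) (hA₀1 : A₀ < 1) (h2 : A₀ ≤ A) (h3 : A ≤ 1) :
    A₀ * Real.log (A₀ / G) + (1 - A₀) * Real.log ((1 - A₀) / R)
      + (A - A₀) * (Real.log (A₀ / G) - Real.log ((1 - A₀) / R))
      ≤ A * Real.log (A / G) + (1 - A) * Real.log ((1 - A) / R) := by
  have hA₀ : 0 < A₀ := hG.trans h1
  have hB₀ : 0 < 1 - A₀ := by linarith
  have hA : 0 < A := hA₀.trans_le h2
  rcases eq_or_lt_of_le h3 with h3 | h3
  · subst h3
    have e1 : Real.log (A₀ / G) = Real.log A₀ - Real.log G :=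
      Real.log_div hA₀.ne' hG.ne'
    have e2 : Real.log ((1:ℝ) / G) = Real.log 1 - Real.log G :=
      Real.log_div one_ne_zero hG.ne'
    have e3 : Real.log A₀ ≤ 0 := Real.log_nonpos hA₀.le hA₀1.le
    have key : A₀ * Real.log (A₀ / G) + (1 - A₀) * Real.log ((1 - A₀) / R)
        + (1 - A₀) * (Real.log (A₀ / G) - Real.log ((1 - A₀) / R))
        = Real.log (A₀ / G) := by ring
    rw [key]
    simp only [sub_self, zero_mul, add_zero, one_mul]
    rw [e1, e2]
    simp at e2 ⊢
    linarith
  · have hB : 0 < 1 - A := by linarith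
    have key : 0 ≤ A * Real.log (A / A₀) + (1 - A) * Real.log ((1 - A) / (1 - A₀)) := by
      have k1 : Real.log (A₀ / A) ≤ A₀ / A - 1 :=
        Real.log_le_sub_one_of_pos (by positivity)
      have k2 : Real.log ((1 - A₀) / (1 - A)) ≤ (1 - A₀) / (1 - A) - 1 :=
        Real.log_le_sub_one_of_pos (by positivity)
      have i1 : Real.log (A / A₀) = - Real.log (A₀ / A) := by
        rw [← Real.log_inv]; congr 1; field_simp
      have i2 : Real.log ((1 - A) / (1 - A₀)) = - Real.log ((1 - A₀) / (1 - A)) := by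
        rw [← Real.log_inv]; congr 1; field_simp
      have j1 : A - A₀ ≤ A * Real.log (A / A₀) := by
        rw [i1]
        have : A * Real.log (A₀ / A) ≤ A * (A₀ / A - 1) :=
          mul_le_mul_of_nonneg_left k1 hA.le
        have h' : A * (A₀ / A - 1) = A₀ - A := by field_simp
        linarith [this]
      have j2 : (1 - A) - (1 - A₀) ≤ (1 - A) * Real.log ((1 - A) / (1 - A₀)) := by
        rw [i2]
        have : (1 - A) * Real.log ((1 - A₀) / (1 - A)) ≤ (1 - A) * ((1 - A₀) / (1 - A) - 1) :=
          mul_le_mul_of_nonneg_left k2 hB.le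
        have h' : (1 - A) * ((1 - A₀) / (1 - A) - 1) = (1 - A₀) - (1 - A) := by field_simp
        linarith [this]
      linarith
    have e1 : Real.log (A / G) = Real.log (A / A₀) + Real.log (A₀ / G) := by
      rw [← Real.log_mul (by positivity) (by positivity)]
      congr 1; field_simp
    have e2 : Real.log ((1 - A) / R)
        = Real.log ((1 - A) / (1 - A₀)) + Real.log ((1 - A₀) / R) := by
      rw [← Real.log_mul (by positivity) (by positivity)]
      congr 1; field_simp
    rw [e1, e2]
    nlinarith [key]

/-- Optimal reweighting for the green-list watermarking problem: subject to
preserving total probability and increasing the green mass by at least `Δ`,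
the KL-minimal reweighting `r` is constant on the green list and constant on
the red list, and the minimal value is
`(R−Δ)log((R−Δ)/R) + (G+Δ)log((G+Δ)/G)`. -/
theorem green_list_optimal_reweighting {V : Type*} [Fintype V]
    (p : V → ℝ) (hp0 : ∀ k, 0 < p k) (hp1 : ∑ k, p k = 1)
    (S : Finset V) (G R Δ : ℝ)
    (hG : G = ∑ k ∈ S, p k) (hR : R = 1 - G)
    (hG0 : 0 < G) (hG1 : G < 1) (hΔ0 : 0 < Δ) (hΔR : Δ < R) :
    IsLeast
      {val : ℝ | ∃ r : V → ℝ, (∀ k, 0 ≤ r k) ∧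
        (∑ k, r k * p k = 1) ∧
        (Δ ≤ ∑ k ∈ S, (r k - 1) * p k) ∧
        val = ∑ k, r k * p k * Real.log (r k)}
      ((R - Δ) * Real.log ((R - Δ) / R) + (G + Δ) * Real.log ((G + Δ) / G)) ∧
    (∀ r : V → ℝ, (∀ k, 0 ≤ r k) →
      (∑ k, r k * p k = 1) →
      (Δ ≤ ∑ k ∈ S, (r k - 1) * p k) →
      (∑ k, r k * p k * Real.log (r k) =
        (R - Δ) * Real.log ((R - Δ) / R) + (G + Δ) * Real.log ((G + Δ) / G)) →
      (∀ k ∈ S, r k = (G + Δ) / G) ∧ (∀ k ∉ S, r k = (R - Δ) / R)) := by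
  classical
  have hR0 : 0 < R := by linarith
  have hRΔ : 0 < R - Δ := by linarith
  have hGΔ : 0 < G + Δ := by linarith
  have hGΔ1 : G + Δ < 1 := by linarith
  have hGS : ∑ k ∈ S, p k = G := hG.symm
  have hRS : ∑ k ∈ Sᶜ, p k = R := by
    have := Finset.sum_add_sum_compl S p
    rw [hp1, hGS] at this; linarith
  set tgt : ℝ := (R - Δ) * Real.log ((R - Δ) / R) + (G + Δ) * Real.log ((G + Δ) / G)
    with htgt
  -- positivity of the multiplier
  have hd1 : 0 < Real.log ((G + Δ) / G) :=
    Real.log_pos ((one_lt_div hG0).2 (by linarith))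
  have hd2 : Real.log ((R - Δ) / R) < 0 :=
    Real.log_neg (by positivity) ((div_lt_one hR0).2 (by linarith))
  have hSne : S.Nonempty := by
    rw [Finset.nonempty_iff_ne_empty]
    rintro rfl; simp at hGS; linarith
  have hCne : Sᶜ.Nonempty := by
    rw [Finset.nonempty_iff_ne_empty]
    intro h; rw [h] at hRS; simp at hRS; linarith
  have main : ∀ r : V → ℝ, (∀ k, 0 ≤ r k) → (∑ k, r k * p k = 1) →
      (Δ ≤ ∑ k ∈ S, (r k - 1) * p k) →
      tgt ≤ ∑ k, r k * p k * Real.log (r k) ∧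
      ((∑ k, r k * p k * Real.log (r k)) = tgt →
        (∀ k ∈ S, r k = (G + Δ) / G) ∧ (∀ k ∉ S, r k = (R - Δ) / R)) := by
    intro r hr hsum hcon
    set A := ∑ k ∈ S, r k * p k with hA
    set B := ∑ k ∈ Sᶜ, r k * p k with hB
    have hAB : A + B = 1 := by
      rw [hA, hB, Finset.sum_add_sum_compl, hsum]
    have hA0 : G + Δ ≤ A := by
      have : ∑ k ∈ S, (r k - 1) * p k = A - G := by
        rw [hA, ← hGS, ← Finset.sum_sub_distrib]
        exact Finset.sum_congr rfl fun k _ => by ring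
      linarith [hcon, this.symm ▸ hcon]
    have hB0 : 0 ≤ B := Finset.sum_nonneg fun k _ => mul_nonneg (hr k) (hp0 k).le
    have hA1 : A ≤ 1 := by linarith
    have hBval : B = 1 - A := by linarith
    have jS := jensen_part S p r (fun k _ => hp0 k) hr (by rw [hGS]; exact hG0)
    have jC := jensen_part Sᶜ p r (fun k _ => hp0 k) hr (by rw [hRS]; exact hR0)
    rw [hGS, ← hA] at jS
    rw [hRS, ← hB] at jC
    have split : ∑ k, r k * p k * Real.log (r k)
        = (∑ k ∈ S, r k * p k * Real.log (r k))
          + ∑ k ∈ Sᶜ, r k * p k * Real.log (r k) :=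
      (Finset.sum_add_sum_compl S _).symm
    clear_value A B tgt
    have mono := bin_mono G R (G + Δ) A hG0 hR0 (by linarith) hGΔ1 hA0 hA1
    have htgt' : tgt = (G + Δ) * Real.log ((G + Δ) / G)
        + (1 - (G + Δ)) * Real.log ((1 - (G + Δ)) / R) := by
      rw [htgt]; have : 1 - (G + Δ) = R - Δ := by linarith
      rw [this]; ring
    have hmul : 0 ≤ (A - (G + Δ)) * (Real.log ((G + Δ) / G) - Real.log ((1 - (G + Δ)) / R)) := by
      have : 1 - (G + Δ) = R - Δ := by linarith
      rw [this]
      apply mul_nonneg (by linarith)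
      linarith
    constructor
    · rw [split]
      calc tgt ≤ tgt + (A - (G + Δ)) * (Real.log ((G + Δ) / G)
            - Real.log ((1 - (G + Δ)) / R)) := by linarith
        _ ≤ A * Real.log (A / G) + (1 - A) * Real.log ((1 - A) / R) := by
            rw [htgt']; exact mono
        _ ≤ _ := by
            rw [← hBval]
            exact add_le_add jS.1 jC.1
    · intro heq
      rw [split] at heq
      -- all inequalities are equalities
      have hchain : tgt + (A - (G + Δ)) * (Real.log ((G + Δ) / G)
            - Real.log ((1 - (G + Δ)) / R))
          ≤ A * Real.log (A / G) + B * Real.log (B / R) := by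
        rw [hBval, htgt']; exact mono
      have hAeq : A = G + Δ := by
        by_contra hne
        have h1 : G + Δ < A := lt_of_le_of_ne hA0 (Ne.symm hne)
        have hstrict : 0 < (A - (G + Δ)) * (Real.log ((G + Δ) / G)
            - Real.log ((1 - (G + Δ)) / R)) := by
          have e : 1 - (G + Δ) = R - Δ := by linarith
          rw [e]
          apply mul_pos (by linarith); linarith
        linarith [jS.1, jC.1, hchain, heq]
      have hBeq : B = R - Δ := by linarith
      have hSeq : ∑ k ∈ S, r k * p k * Real.log (r k) = A * Real.log (A / G) := by
        linarith [jS.1, jC.1, hchain, hmul]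
      have hCeq : ∑ k ∈ Sᶜ, r k * p k * Real.log (r k) = B * Real.log (B / R) := by
        linarith [jS.1, jC.1, hchain, hmul]
      have hconstS := jS.2 hSeq.le
      have hconstC := jC.2 hCeq.le
      obtain ⟨j₀, hj₀⟩ := hSne
      obtain ⟨j₁, hj₁⟩ := hCne
      have hAval : A = r j₀ * G := by
        rw [hA, ← hGS, Finset.mul_sum]
        exact Finset.sum_congr rfl fun k hk => by rw [hconstS k hk j₀ hj₀]
      have hBval' : B = r j₁ * R := by
        rw [hB, ← hRS, Finset.mul_sum]
        exact Finset.sum_congr rfl fun k hk => by rw [hconstC k hk j₁ hj₁]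
      have hj₀val : r j₀ = (G + Δ) / G := by
        rw [eq_div_iff hG0.ne']; rw [hAeq] at hAval; linarith
      have hj₁val : r j₁ = (R - Δ) / R := by
        rw [eq_div_iff hR0.ne']; rw [hBeq] at hBval'; linarith
      constructor
      · intro k hk
        rw [hconstS k hk j₀ hj₀, hj₀val]
      · intro k hk
        rw [hconstC k (Finset.mem_compl.2 hk) j₁ hj₁, hj₁val]
  refine ⟨⟨?_, fun v hv => ?_⟩, fun r h1 h2 h3 h4 => (main r h1 h2 h3).2 h4⟩
  · -- membership: the optimal r
    refine ⟨fun k => if k ∈ S then (G + Δ) / G else (R - Δ) / R,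
      fun k => ?_, ?_, ?_, ?_⟩
    · dsimp only; split <;> positivity
    · rw [← Finset.sum_add_sum_compl S]
      have e1 : ∑ k ∈ S, (if k ∈ S then (G + Δ) / G else (R - Δ) / R) * p k
          = (G + Δ) / G * ∑ k ∈ S, p k := by
        rw [Finset.mul_sum]
        exact Finset.sum_congr rfl fun k hk => by rw [if_pos hk]
      have e2 : ∑ k ∈ Sᶜ, (if k ∈ S then (G + Δ) / G else (R - Δ) / R) * p k
          = (R - Δ) / R * ∑ k ∈ Sᶜ, p k := by
        rw [Finset.mul_sum]
        exact Finset.sum_congr rfl fun k hk =>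
          by rw [if_neg (Finset.mem_compl.1 hk)]
      rw [e1, e2, hGS, hRS]; field_simp; linarith
    · have e1 : ∑ k ∈ S, ((if k ∈ S then (G + Δ) / G else (R - Δ) / R) - 1) * p k
          = ((G + Δ) / G - 1) * ∑ k ∈ S, p k := by
        rw [Finset.mul_sum]
        exact Finset.sum_congr rfl fun k hk => by rw [if_pos hk]
      rw [e1, hGS]; field_simp; linarith
    · rw [← Finset.sum_add_sum_compl S]
      have e1 : ∑ k ∈ S, (if k ∈ S then (G + Δ) / G else (R - Δ) / R) * p k
            * Real.log (if k ∈ S then (G + Δ) / G else (R - Δ) / R)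
          = ((G + Δ) / G * Real.log ((G + Δ) / G)) * ∑ k ∈ S, p k := by
        rw [Finset.mul_sum]
        refine Finset.sum_congr rfl fun k hk => ?_
        rw [if_pos hk]; ring
      have e2 : ∑ k ∈ Sᶜ, (if k ∈ S then (G + Δ) / G else (R - Δ) / R) * p k
            * Real.log (if k ∈ S then (G + Δ) / G else (R - Δ) / R)
          = ((R - Δ) / R * Real.log ((R - Δ) / R)) * ∑ k ∈ Sᶜ, p k := by
        rw [Finset.mul_sum]
        refine Finset.sum_congr rfl fun k hk => ?_
        rw [if_neg (Finset.mem_compl.1 hk)]; ring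
      rw [e1, e2, hGS, hRS]
      field_simp
      ring
  · obtain ⟨r, h1, h2, h3, h4⟩ := hv
    rw [h4]
    exact (main r h1 h2 h3).1
end

section
/- With green list probability G ∈ (0,1) under the original distribution, and the watermarked distribution obtained by adding δ to the logits of green tokens, the difference of green word probability equals DG(δ) = G(1−G)(e^δ − 1)/(G e^δ − G + 1), and the KL divergence of the watermarked distribution from the original equals D_kl(δ) = G δ e^δ/(G e^δ − G + 1) − log(G e^δ − G + 1). -/
open Finset Real

/-- Closed-form expressions for the soft (green-list logit shift) watermarking:
the difference of green probability is `G(1−G)(e^δ−1)/(G e^δ − G + 1)` and the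
KL divergence from the original distribution is
`G δ e^δ/(G e^δ − G + 1) − log(G e^δ − G + 1)`. -/
theorem soft_watermark_DG_KL_formulas {V : Type*} [Fintype V] [Nonempty V] [DecidableEq V]
    (l : V → ℝ) (S : Finset V) (δ : ℝ)
    (p q : V → ℝ) (G : ℝ)
    (hp : ∀ k, p k = Real.exp (l k) / ∑ k', Real.exp (l k'))
    (hq : ∀ k, q k = Real.exp (l k + δ * (if k ∈ S then 1 else 0)) /
        ∑ k', Real.exp (l k' + δ * (if k' ∈ S then 1 else 0)))
    (hG : G = ∑ k ∈ S, p k) :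
    (∑ k ∈ S, q k) - G =
        G * (1 - G) * (Real.exp δ - 1) / (G * Real.exp δ - G + 1) ∧
    (∑ k, q k * Real.log (q k / p k)) =
        G * δ * Real.exp δ / (G * Real.exp δ - G + 1) -
          Real.log (G * Real.exp δ - G + 1) := by
  classical
  set Z : ℝ := ∑ k', Real.exp (l k') with hZ
  set Z' : ℝ := ∑ k', Real.exp (l k' + δ * (if k' ∈ S then 1 else 0)) with hZ'
  set A : ℝ := ∑ k ∈ S, Real.exp (l k) with hA
  have hZpos : 0 < Z := Finset.sum_pos (fun k _ => Real.exp_pos _) Finset.univ_nonempty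
  have hZ'pos : 0 < Z' := Finset.sum_pos (fun k _ => Real.exp_pos _) Finset.univ_nonempty
  have hterm : ∀ k, Real.exp (l k + δ * (if k ∈ S then 1 else 0)) =
      Real.exp (l k) + (if k ∈ S then (Real.exp δ - 1) * Real.exp (l k) else 0) := by
    intro k
    by_cases h : k ∈ S <;> simp [h, Real.exp_add] <;> ring
  have hZ'eq : Z' = Z + (Real.exp δ - 1) * A := by
    rw [hZ']
    simp only [hterm]
    rw [Finset.sum_add_distrib]
    congr 1
    rw [Finset.sum_ite_mem, Finset.univ_inter, ← Finset.mul_sum]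
  have hG' : G = A / Z := by
    rw [hG]
    simp only [hp]
    rw [← Finset.sum_div]
  have hSq : ∑ k ∈ S, q k = Real.exp δ * A / Z' := by
    have : ∀ k ∈ S, q k = Real.exp δ * Real.exp (l k) / Z' := by
      intro k hk
      rw [hq k]
      simp [hk, Real.exp_add, mul_comm]
    rw [Finset.sum_congr rfl this, ← Finset.sum_div, ← Finset.mul_sum]
  have hD : G * Real.exp δ - G + 1 = Z' / Z := by
    rw [hG', hZ'eq]
    field_simp
    ring
  rw [hG'] at hD
  constructor
  · rw [hSq, hG', hD, hZ'eq]
    have h1 : Z + (Real.exp δ - 1) * A ≠ 0 := by rw [← hZ'eq]; exact hZ'pos.ne'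
    have h2 : -A + A * Real.exp δ + Z ≠ 0 := by rw [show -A + A * Real.exp δ + Z = Z + (Real.exp δ - 1) * A by ring]; exact h1
    rw [div_sub_div _ _ h1 hZpos.ne', div_eq_div_iff (mul_ne_zero h1 hZpos.ne') (div_ne_zero h1 hZpos.ne')]
    field_simp
    ring
  · have hratio : ∀ k, q k * Real.log (q k / p k) =
        δ * (q k * (if k ∈ S then 1 else 0)) + q k * (Real.log Z - Real.log Z') := by
      intro k
      have hqp : q k / p k = Real.exp (δ * (if k ∈ S then 1 else 0)) * (Z / Z') := by
        rw [hq k, hp k, Real.exp_add]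
        field_simp
      rw [hqp, Real.log_mul (Real.exp_ne_zero _) (by positivity), Real.log_exp,
        Real.log_div hZpos.ne' hZ'pos.ne']
      ring
    have hq1 : ∑ k, q k = 1 := by
      simp only [hq]
      rw [← Finset.sum_div, ← hZ']
      exact div_self hZ'pos.ne'
    have hqind : ∑ k, q k * (if k ∈ S then 1 else 0) = Real.exp δ * A / Z' := by
      simp only [mul_ite, mul_one, mul_zero]
      rw [Finset.sum_ite_mem, Finset.univ_inter, hSq]
    calc (∑ k, q k * Real.log (q k / p k))
        = ∑ k, (δ * (q k * (if k ∈ S then 1 else 0)) + q k * (Real.log Z - Real.log Z')) :=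
          Finset.sum_congr rfl (fun k _ => hratio k)
      _ = δ * (∑ k, q k * (if k ∈ S then 1 else 0)) + (∑ k, q k) * (Real.log Z - Real.log Z') := by
          rw [Finset.sum_add_distrib, ← Finset.mul_sum, ← Finset.sum_mul]
      _ = δ * (Real.exp δ * A / Z') + (Real.log Z - Real.log Z') := by
          rw [hqind, hq1, one_mul]
      _ = G * δ * Real.exp δ / (G * Real.exp δ - G + 1) -
            Real.log (G * Real.exp δ - G + 1) := by
          rw [hG', hD, Real.log_div hZ'pos.ne' hZpos.ne']
          have : A / Z * δ * Real.exp δ / (Z' / Z) = δ * (Real.exp δ * A / Z') := by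
            field_simp
          rw [this]
          ring
end

section
/- For fixed G ∈ (0,1), Δ > 0, and λ ≥ 0, define the Lagrangian L(δ, λ) = D_kl(δ) − λ(DG(δ) − Δ), where D_kl(δ) = G δ e^δ/(G e^δ − G + 1) − log(G e^δ − G + 1) and DG(δ) = G(1−G)(e^δ − 1)/(G e^δ − G + 1). Then the infimum of L(·, λ) over δ ∈ ℝ is attained at δ = λ, i.e., inf_δ L(δ, λ) = L(λ, λ). -/
open Real

private lemma denom_pos (G : ℝ) (hG0 : 0 < G) (hG1 : G < 1) (x : ℝ) :
    0 < G * Real.exp x - G + 1 := by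
  have h := Real.exp_pos x
  nlinarith

private lemma lag_hasDerivAt (G Δ lam : ℝ) (hG0 : 0 < G) (hG1 : G < 1) (x : ℝ) :
    HasDerivAt (fun δ : ℝ =>
      G * δ * Real.exp δ / (G * Real.exp δ - G + 1) -
        Real.log (G * Real.exp δ - G + 1) -
        lam * (G * (1 - G) * (Real.exp δ - 1) / (G * Real.exp δ - G + 1) - Δ))
      ((x - lam) * (G * (1 - G) * Real.exp x) / (G * Real.exp x - G + 1) ^ 2) x := by
  have hD : 0 < G * Real.exp x - G + 1 := denom_pos G hG0 hG1 x
  have hexp : HasDerivAt Real.exp (Real.exp x) x := Real.hasDerivAt_exp x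
  have hD' : HasDerivAt (fun δ : ℝ => G * Real.exp δ - G + 1) (G * Real.exp x) x := by
    simpa using ((hexp.const_mul G).sub_const G).add_const 1
  have h1 : HasDerivAt (fun δ : ℝ => G * δ * Real.exp δ)
      (G * Real.exp x + G * x * Real.exp x) x := by
    have := ((hasDerivAt_id x).const_mul G).mul hexp
    exact this.congr_deriv (by simp only [mul_one, id_eq])
  have hq1 := h1.div hD' hD.ne'
  have hlog := hD'.log hD.ne'
  have hnum : HasDerivAt (fun δ : ℝ => G * (1 - G) * (Real.exp δ - 1))
      (G * (1 - G) * Real.exp x) x := by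
    simpa using (hexp.sub_const 1).const_mul (G * (1 - G))
  have hq2 := (((hnum.div hD' hD.ne').sub_const Δ).const_mul lam)
  have h := (hq1.sub hlog).sub hq2
  refine h.congr_deriv ?_
  have hexp' := Real.exp_pos x
  field_simp
  ring

/-- For the soft watermarking Lagrangian
`L(δ,λ) = D_kl(δ) − λ(DG(δ) − Δ)` built from
`D_kl(δ) = G δ e^δ/(G e^δ − G + 1) − log(G e^δ − G + 1)` and
`DG(δ) = G(1−G)(e^δ−1)/(G e^δ − G + 1)`, the infimum over `δ` is attained at
`δ = λ`. -/
theorem lagrangian_inf_at_lambda (G Δ lam : ℝ)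
    (hG0 : 0 < G) (hG1 : G < 1) (hΔ : 0 < Δ) (hlam : 0 ≤ lam) :
    let Dkl : ℝ → ℝ := fun δ =>
      G * δ * Real.exp δ / (G * Real.exp δ - G + 1) -
        Real.log (G * Real.exp δ - G + 1)
    let DG : ℝ → ℝ := fun δ =>
      G * (1 - G) * (Real.exp δ - 1) / (G * Real.exp δ - G + 1)
    let L : ℝ → ℝ → ℝ := fun δ lam' => Dkl δ - lam' * (DG δ - Δ)
    ∀ δ : ℝ, L lam lam ≤ L δ lam := by
  intro Dkl DG L δ
  set f : ℝ → ℝ := fun x =>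
    G * x * Real.exp x / (G * Real.exp x - G + 1) -
      Real.log (G * Real.exp x - G + 1) -
      lam * (G * (1 - G) * (Real.exp x - 1) / (G * Real.exp x - G + 1) - Δ) with hf
  have hL : ∀ x : ℝ, L x lam = f x := fun x => by simp [L, Dkl, DG, hf]
  have hderiv : ∀ x : ℝ, HasDerivAt f
      ((x - lam) * (G * (1 - G) * Real.exp x) / (G * Real.exp x - G + 1) ^ 2) x :=
    fun x => lag_hasDerivAt G Δ lam hG0 hG1 x
  have hdiff : Differentiable ℝ f := fun x => (hderiv x).differentiableAt
  have hderiv_eq : ∀ x : ℝ, deriv f x =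
      (x - lam) * (G * (1 - G) * Real.exp x) / (G * Real.exp x - G + 1) ^ 2 :=
    fun x => (hderiv x).deriv
  rw [hL lam, hL δ]
  rcases le_total δ lam with h | h
  · -- antitone on Iic lam
    have hanti : AntitoneOn f (Set.Iic lam) := by
      apply antitoneOn_of_deriv_nonpos (convex_Iic lam) hdiff.continuous.continuousOn
        (fun x _ => (hdiff x).differentiableWithinAt)
      intro x hx
      rw [interior_Iic] at hx
      rw [hderiv_eq x]
      have hD := denom_pos G hG0 hG1 x
      have hexp := Real.exp_pos x
      have hxlam : x - lam < 0 := by linarith [hx.out]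
      exact div_nonpos_of_nonpos_of_nonneg
        (mul_nonpos_of_nonpos_of_nonneg hxlam.le ((mul_pos (mul_pos hG0 (by linarith : (0:ℝ) < 1 - G)) hexp).le)) (by positivity)
    exact hanti (Set.mem_Iic.mpr h) (Set.mem_Iic.mpr le_rfl) h
  · -- monotone on Ici lam
    have hmono : MonotoneOn f (Set.Ici lam) := by
      apply monotoneOn_of_deriv_nonneg (convex_Ici lam) hdiff.continuous.continuousOn
        (fun x _ => (hdiff x).differentiableWithinAt)
      intro x hx
      rw [interior_Ici] at hx
      rw [hderiv_eq x]
      have hD := denom_pos G hG0 hG1 x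
      have hexp := Real.exp_pos x
      have hxlam : 0 < x - lam := by linarith [hx.out]
      exact div_nonneg (mul_nonneg hxlam.le ((mul_pos (mul_pos hG0 (by linarith : (0:ℝ) < 1 - G)) hexp).le)) (by positivity)
    exact hmono (Set.mem_Ici.mpr le_rfl) (Set.mem_Ici.mpr h) h
end

section
/- Consider T tokens with green probabilities G_1,…,G_T ∈ (0,1). In the problem of minimizing (1/T)Σ_t D_kl,t(δ_t) subject to (1/T)Σ_t DG_t(δ_t) ≥ Δ over δ_1,…,δ_T, if a feasible solution exists, then at any optimal solution all δ_t are equal, and the common optimal value δ* is the unique positive λ satisfying (1/T)Σ_t DG_t(λ) = Δ. -/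
open Finset Real Set Filter

noncomputable def dg (g δ : ℝ) : ℝ :=
  g * (1 - g) * (Real.exp δ - 1) / (g * Real.exp δ - g + 1)

noncomputable def dkl (g δ : ℝ) : ℝ :=
  g * δ * Real.exp δ / (g * Real.exp δ - g + 1) -
    Real.log (g * Real.exp δ - g + 1)

lemma hden {g : ℝ} (hg0 : 0 < g) (hg1 : g < 1) (δ : ℝ) :
    0 < g * Real.exp δ - g + 1 := by
  nlinarith [Real.exp_pos δ, mul_pos hg0 (Real.exp_pos δ)]

lemma hasDerivAt_dg {g : ℝ} (hg0 : 0 < g) (hg1 : g < 1) (δ : ℝ) :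
    HasDerivAt (dg g) (g * (1 - g) * Real.exp δ / (g * Real.exp δ - g + 1) ^ 2) δ := by
  have hd := hden hg0 hg1 δ
  have h1 : HasDerivAt (fun x => g * (1 - g) * (Real.exp x - 1)) (g * (1 - g) * Real.exp δ) δ := by
    simpa using ((Real.hasDerivAt_exp δ).sub_const 1).const_mul (g * (1 - g))
  have h2 : HasDerivAt (fun x => g * Real.exp x - g + 1) (g * Real.exp δ) δ := by
    simpa using (((Real.hasDerivAt_exp δ).const_mul g).sub_const g).add_const 1
  have := h1.div h2 (ne_of_gt hd)
  exact this.congr_deriv (by field_simp; ring)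

lemma hasDerivAt_dkl {g : ℝ} (hg0 : 0 < g) (hg1 : g < 1) (δ : ℝ) :
    HasDerivAt (dkl g) (δ * (g * (1 - g) * Real.exp δ / (g * Real.exp δ - g + 1) ^ 2)) δ := by
  have hd := hden hg0 hg1 δ
  have h1 : HasDerivAt (fun x => g * x * Real.exp x)
      (g * Real.exp δ + g * δ * Real.exp δ) δ := by
    have hc : HasDerivAt (fun x : ℝ => g * x) g δ := by
      simpa using (hasDerivAt_id δ).const_mul g
    exact hc.mul (Real.hasDerivAt_exp δ)
  have h2 : HasDerivAt (fun x => g * Real.exp x - g + 1) (g * Real.exp δ) δ := by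
    simpa using (((Real.hasDerivAt_exp δ).const_mul g).sub_const g).add_const 1
  have hq := h1.div h2 (ne_of_gt hd)
  have hl := h2.log (ne_of_gt hd)
  have := hq.sub hl
  exact this.congr_deriv (by field_simp; ring)

lemma dg_deriv_pos {g : ℝ} (hg0 : 0 < g) (hg1 : g < 1) (δ : ℝ) :
    0 < g * (1 - g) * Real.exp δ / (g * Real.exp δ - g + 1) ^ 2 :=
  div_pos (mul_pos (mul_pos hg0 (by linarith)) (Real.exp_pos δ)) (pow_pos (hden hg0 hg1 δ) 2)

lemma dg_strictMono {g : ℝ} (hg0 : 0 < g) (hg1 : g < 1) : StrictMono (dg g) :=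
  strictMono_of_hasDerivAt_pos (hasDerivAt_dg hg0 hg1) (dg_deriv_pos hg0 hg1)

lemma dg_zero (g : ℝ) : dg g 0 = 0 := by simp [dg]

lemma dg_cont {g : ℝ} (hg0 : 0 < g) (hg1 : g < 1) : Continuous (dg g) :=
  (Differentiable.continuous fun δ => (hasDerivAt_dg hg0 hg1 δ).differentiableAt)

lemma dg_tendsto {g : ℝ} (hg0 : 0 < g) (hg1 : g < 1) :
    Tendsto (dg g) atTop (nhds (1 - g)) := by
  have heq : ∀ δ, dg g δ = (1 - g) - (1 - g) / (g * Real.exp δ + (1 - g)) := by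
    intro δ
    have hd := hden hg0 hg1 δ
    have hd' : g * Real.exp δ + (1 - g) ≠ 0 := by nlinarith
    rw [dg]
    rw [eq_sub_iff_add_eq, div_add_div _ _ hd.ne' hd', div_eq_iff (mul_ne_zero hd.ne' hd')]
    ring
  rw [funext heq]
  have hden_top : Tendsto (fun δ => g * Real.exp δ + (1 - g)) atTop atTop :=
    tendsto_atTop_add_const_right _ _ (Real.tendsto_exp_atTop.const_mul_atTop hg0)
  have h0 : Tendsto (fun δ => (1 - g) / (g * Real.exp δ + (1 - g))) atTop (nhds 0) :=
    Tendsto.div_atTop tendsto_const_nhds hden_top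
  simpa using tendsto_const_nhds.sub h0

/-- strict minimum of `dkl g · - lam * dg g ·` at `lam`. -/
lemma key_lt {g : ℝ} (hg0 : 0 < g) (hg1 : g < 1) (lam : ℝ) {δ : ℝ} (hne : δ ≠ lam) :
    dkl g lam - lam * dg g lam < dkl g δ - lam * dg g δ := by
  set f : ℝ → ℝ := fun x => dkl g x - lam * dg g x with hf
  have hderiv : ∀ x, HasDerivAt f
      ((x - lam) * (g * (1 - g) * Real.exp x / (g * Real.exp x - g + 1) ^ 2)) x := by
    intro x
    have := (hasDerivAt_dkl hg0 hg1 x).sub ((hasDerivAt_dg hg0 hg1 x).const_mul lam)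
    exact this.congr_deriv (by ring)
  have hcont : Continuous f :=
    Differentiable.continuous fun x => (hderiv x).differentiableAt
  rcases lt_or_gt_of_ne hne with h | h
  · -- δ < lam : f strictly anti on Iic lam
    have hanti : StrictAntiOn f (Set.Iic lam) := by
      apply strictAntiOn_of_deriv_neg (convex_Iic lam) hcont.continuousOn
      intro x hx
      rw [interior_Iic] at hx
      rw [(hderiv x).deriv]
      have := dg_deriv_pos hg0 hg1 x
      nlinarith [hx.out]
    exact hanti (le_of_lt h) (le_refl lam) h
  · -- lam < δ : f strictly mono on Ici lam
    have hmono : StrictMonoOn f (Set.Ici lam) := by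
      apply strictMonoOn_of_deriv_pos (convex_Ici lam) hcont.continuousOn
      intro x hx
      rw [interior_Ici] at hx
      rw [(hderiv x).deriv]
      have := dg_deriv_pos hg0 hg1 x
      nlinarith [hx.out]
    exact hmono (le_refl lam) (le_of_lt h) h

lemma key_le {g : ℝ} (hg0 : 0 < g) (hg1 : g < 1) (lam δ : ℝ) :
    dkl g lam - lam * dg g lam ≤ dkl g δ - lam * dg g δ := by
  rcases eq_or_ne δ lam with rfl | h
  · exact le_refl _
  · exact (key_lt hg0 hg1 lam h).le

/-- In the multi-token watermarking problem minimizing the average KL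
divergence subject to an average DG constraint, any optimal solution has all
`δ_t` equal, and the common value is the unique positive `λ` with
`(1/T) Σ_t DG_t(λ) = Δ`. -/
theorem multi_token_optimal_constant (T : ℕ) (hT : 0 < T)
    (G : Fin T → ℝ) (hG0 : ∀ t, 0 < G t) (hG1 : ∀ t, G t < 1)
    (Δ : ℝ) (hΔ0 : 0 < Δ)
    (hfeas : Δ < (1 / (T : ℝ)) * ∑ t, (1 - G t)) :
    let DG : Fin T → ℝ → ℝ := fun t δ =>
      G t * (1 - G t) * (Real.exp δ - 1) / (G t * Real.exp δ - G t + 1)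
    let Dkl : Fin T → ℝ → ℝ := fun t δ =>
      G t * δ * Real.exp δ / (G t * Real.exp δ - G t + 1) -
        Real.log (G t * Real.exp δ - G t + 1)
    let Feasible : (Fin T → ℝ) → Prop := fun δ =>
      Δ ≤ (1 / (T : ℝ)) * ∑ t, DG t (δ t)
    let Optimal : (Fin T → ℝ) → Prop := fun δ =>
      Feasible δ ∧ ∀ δ' : Fin T → ℝ, Feasible δ' →
        (1 / (T : ℝ)) * ∑ t, Dkl t (δ t) ≤ (1 / (T : ℝ)) * ∑ t, Dkl t (δ' t)
    ∃! lam : ℝ, (0 < lam ∧ (1 / (T : ℝ)) * ∑ t, DG t lam = Δ) ∧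
      ∀ δ : Fin T → ℝ, Optimal δ → ∀ t, δ t = lam := by
  intro DG Dkl Feasible Optimal
  have hT' : (0 : ℝ) < T := Nat.cast_pos.mpr hT
  have hTinv : (0 : ℝ) < 1 / T := by positivity
  have hDGdg : ∀ t δ, DG t δ = dg (G t) δ := fun _ _ => rfl
  have hDkldkl : ∀ t δ, Dkl t δ = dkl (G t) δ := fun _ _ => rfl
  set S : ℝ → ℝ := fun lam => (1 / (T : ℝ)) * ∑ t, dg (G t) lam with hSdef
  -- S strictly monotone
  have hSmono : StrictMono S := by
    intro a b hab
    apply mul_lt_mul_of_pos_left _ hTinv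
    apply Finset.sum_lt_sum_of_nonempty (by simp [Finset.univ_nonempty_iff, Fin.pos_iff_nonempty.mp hT])
    intro t _
    exact dg_strictMono (hG0 t) (hG1 t) hab
  have hS0 : S 0 = 0 := by simp [hSdef, dg_zero]
  -- limit of S at top
  have hSlim : Tendsto S atTop (nhds ((1 / (T : ℝ)) * ∑ t, (1 - G t))) := by
    apply Tendsto.const_mul
    exact tendsto_finset_sum _ fun t _ => dg_tendsto (hG0 t) (hG1 t)
  obtain ⟨M, hM⟩ : ∃ M, Δ < S M := (hSlim.eventually (eventually_gt_nhds hfeas)).exists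
  have h0M : (0 : ℝ) < M := by
    by_contra h
    push_neg at h
    have := hSmono.le_iff_le.mpr h
    rw [hS0] at this
    linarith
  have hScont : Continuous S := by
    apply Continuous.mul continuous_const
    exact continuous_finset_sum _ fun t _ => dg_cont (hG0 t) (hG1 t)
  obtain ⟨lam, hlamIcc, hlamEq⟩ :=
    intermediate_value_Icc h0M.le hScont.continuousOn (by rw [hS0]; exact ⟨hΔ0.le, hM.le⟩)
  have hlam0 : 0 < lam := by
    rcases lt_or_eq_of_le hlamIcc.1 with h | h
    · exact h
    · exfalso; rw [← h, hS0] at hlamEq; linarith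
  -- constant lam is feasible
  have hconstFeas : Feasible (fun _ => lam) := by
    show Δ ≤ (1 / (T : ℝ)) * ∑ t, DG t lam
    simp only [hDGdg]
    exact le_of_eq hlamEq.symm
  -- key sum inequality against any feasible δ'
  have hsumle : ∀ δ' : Fin T → ℝ, Feasible δ' →
      ∑ t, dkl (G t) lam ≤ ∑ t, dkl (G t) (δ' t) := by
    intro δ' hδ'
    have h1 : ∑ t, (dkl (G t) lam - lam * dg (G t) lam) ≤
        ∑ t, (dkl (G t) (δ' t) - lam * dg (G t) (δ' t)) :=
      Finset.sum_le_sum fun t _ => key_le (hG0 t) (hG1 t) lam (δ' t)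
    have hδ'2 : Δ ≤ (1 / (T : ℝ)) * ∑ t, dg (G t) (δ' t) := by
      have := hδ'; simp only [Feasible, hDGdg] at this; exact this
    have h2 : ∑ t, dg (G t) lam ≤ ∑ t, dg (G t) (δ' t) := by
      have : S lam ≤ (1 / (T : ℝ)) * ∑ t, dg (G t) (δ' t) := by rw [hlamEq]; exact hδ'2
      exact le_of_mul_le_mul_left (by simpa [hSdef] using this) hTinv
    have e1 : ∑ t, (dkl (G t) lam - lam * dg (G t) lam)
        = ∑ t, dkl (G t) lam - lam * ∑ t, dg (G t) lam := by
      rw [Finset.sum_sub_distrib, Finset.mul_sum]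
    have e2 : ∑ t, (dkl (G t) (δ' t) - lam * dg (G t) (δ' t))
        = ∑ t, dkl (G t) (δ' t) - lam * ∑ t, dg (G t) (δ' t) := by
      rw [Finset.sum_sub_distrib, Finset.mul_sum]
    nlinarith [mul_le_mul_of_nonneg_left h2 hlam0.le]
  -- constant lam is optimal
  have hconstOpt : Optimal (fun _ => lam) := by
    refine ⟨hconstFeas, fun δ' hδ' => ?_⟩
    have := hsumle δ' hδ'
    simp only [hDkldkl]
    exact mul_le_mul_of_nonneg_left this hTinv.le
  refine ⟨lam, ⟨⟨hlam0, by simp only [hDGdg]; exact hlamEq⟩, ?_⟩, ?_⟩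
  · -- any optimal δ is constant lam
    intro δ hopt t
    by_contra hne
    have hstrict : ∑ t, dkl (G t) lam < ∑ t, dkl (G t) (δ t) := by
      have h1 : ∑ t, (dkl (G t) lam - lam * dg (G t) lam) <
          ∑ t, (dkl (G t) (δ t) - lam * dg (G t) (δ t)) := by
        apply Finset.sum_lt_sum (fun s _ => key_le (hG0 s) (hG1 s) lam (δ s))
        exact ⟨t, Finset.mem_univ t, key_lt (hG0 t) (hG1 t) lam hne⟩
      have hδ2 : Δ ≤ (1 / (T : ℝ)) * ∑ t, dg (G t) (δ t) := by
        have := hopt.1; simp only [Feasible, hDGdg] at this; exact this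
      have h2 : ∑ t, dg (G t) lam ≤ ∑ t, dg (G t) (δ t) := by
        have : S lam ≤ (1 / (T : ℝ)) * ∑ t, dg (G t) (δ t) := by rw [hlamEq]; exact hδ2
        exact le_of_mul_le_mul_left (by simpa [hSdef] using this) hTinv
      have e1 : ∑ t, (dkl (G t) lam - lam * dg (G t) lam)
          = ∑ t, dkl (G t) lam - lam * ∑ t, dg (G t) lam := by
        rw [Finset.sum_sub_distrib, Finset.mul_sum]
      have e2 : ∑ t, (dkl (G t) (δ t) - lam * dg (G t) (δ t))
          = ∑ t, dkl (G t) (δ t) - lam * ∑ t, dg (G t) (δ t) := by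
        rw [Finset.sum_sub_distrib, Finset.mul_sum]
      nlinarith [mul_le_mul_of_nonneg_left h2 hlam0.le]
    have hopt2 := hopt.2 (fun _ => lam) hconstFeas
    simp only [hDkldkl] at hopt2
    have := le_of_mul_le_mul_left hopt2 hTinv
    linarith
  · -- uniqueness
    intro lam' ⟨_, hopt'⟩
    exact (hopt' (fun _ => lam) hconstOpt ⟨0, hT⟩).symm
end

section
/- Strong duality holds for the single-δ watermarking problem: if the problem min_δ (1/T)Σ_t D_kl,t(δ) subject to (1/T)Σ_t DG_t(δ) ≥ Δ is feasible (with each G_t ∈ (0,1) and 0 < Δ < (1/T)Σ_t(1−G_t)), then its optimal value equals sup_{λ≥0} g(λ) where g(λ) = (1/T)Σ_t [(G_t + Δ)λ − log(G_t e^λ − G_t + 1)], and the primal optimum δ* equals the dual optimum λ*. -/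
open Finset Real Filter

lemma wm_A_pos {c : ℝ} (hc0 : 0 < c) (hc1 : c < 1) (δ : ℝ) :
    0 < c * Real.exp δ - c + 1 := by
  nlinarith [Real.exp_pos δ, mul_pos hc0 (Real.exp_pos δ)]

lemma wm_hasDerivAt_DG {c : ℝ} (hc0 : 0 < c) (hc1 : c < 1) (δ : ℝ) :
    HasDerivAt (fun x => c * (1 - c) * (Real.exp x - 1) / (c * Real.exp x - c + 1))
      (c * (1 - c) * Real.exp δ / (c * Real.exp δ - c + 1) ^ 2) δ := by
  have hA := wm_A_pos hc0 hc1 δ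
  have hnum : HasDerivAt (fun x => c * (1 - c) * (Real.exp x - 1))
      (c * (1 - c) * Real.exp δ) δ := by
    simpa using ((Real.hasDerivAt_exp δ).sub_const 1).const_mul (c * (1 - c))
  have hden : HasDerivAt (fun x => c * Real.exp x - c + 1) (c * Real.exp δ) δ := by
    simpa using (((Real.hasDerivAt_exp δ).const_mul c).sub_const c).add_const 1
  have h := hnum.div hden hA.ne'
  refine h.congr_deriv ?_
  have hA'' : 1 - c + c * Real.exp δ ≠ 0 := by linarith
  field_simp
  ring

lemma wm_hasDerivAt_Dkl {c : ℝ} (hc0 : 0 < c) (hc1 : c < 1) (δ : ℝ) :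
    HasDerivAt (fun x => c * x * Real.exp x / (c * Real.exp x - c + 1) -
        Real.log (c * Real.exp x - c + 1))
      (δ * (c * (1 - c) * Real.exp δ / (c * Real.exp δ - c + 1) ^ 2)) δ := by
  have hA := wm_A_pos hc0 hc1 δ
  have hden : HasDerivAt (fun x => c * Real.exp x - c + 1) (c * Real.exp δ) δ := by
    simpa using (((Real.hasDerivAt_exp δ).const_mul c).sub_const c).add_const 1
  have hnum : HasDerivAt (fun x => c * x * Real.exp x)
      (c * Real.exp δ + c * δ * Real.exp δ) δ := by
    exact (((hasDerivAt_id δ).const_mul c).mul (Real.hasDerivAt_exp δ)).congr_deriv (by simp)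
  have h := (hnum.div hden hA.ne').sub (hden.log hA.ne')
  refine h.congr_deriv ?_
  have hA'' : 1 - c + c * Real.exp δ ≠ 0 := by linarith
  field_simp
  ring

lemma wm_hasDerivAt_gterm {c : ℝ} (hc0 : 0 < c) (hc1 : c < 1) (Δ δ : ℝ) :
    HasDerivAt (fun x => (c + Δ) * x - Real.log (c * Real.exp x - c + 1))
      (Δ - c * (1 - c) * (Real.exp δ - 1) / (c * Real.exp δ - c + 1)) δ := by
  have hA := wm_A_pos hc0 hc1 δ
  have hden : HasDerivAt (fun x => c * Real.exp x - c + 1) (c * Real.exp δ) δ := by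
    simpa using (((Real.hasDerivAt_exp δ).const_mul c).sub_const c).add_const 1
  have h := (((hasDerivAt_id δ).const_mul (c + Δ)).sub (hden.log hA.ne'))
  refine h.congr_deriv ?_
  have key : c * (1 - c) * (Real.exp δ - 1) / (c * Real.exp δ - c + 1) = c * Real.exp δ / (c * Real.exp δ - c + 1) - c := by
    rw [eq_sub_iff_add_eq, div_add' _ _ _ hA.ne', div_eq_div_iff hA.ne' hA.ne']; ring
  rw [key]
  ring

lemma wm_Dkl_eq {c : ℝ} (hc0 : 0 < c) (hc1 : c < 1) (Δ δ : ℝ) :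
    c * δ * Real.exp δ / (c * Real.exp δ - c + 1) - Real.log (c * Real.exp δ - c + 1)
      = ((c + Δ) * δ - Real.log (c * Real.exp δ - c + 1))
        + δ * (c * (1 - c) * (Real.exp δ - 1) / (c * Real.exp δ - c + 1) - Δ) := by
  have hA := wm_A_pos hc0 hc1 δ
  have key : c * (1 - c) * (Real.exp δ - 1) / (c * Real.exp δ - c + 1) = c * Real.exp δ / (c * Real.exp δ - c + 1) - c := by
    rw [eq_sub_iff_add_eq, div_add' _ _ _ hA.ne', div_eq_div_iff hA.ne' hA.ne']; ring
  rw [key]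
  ring

lemma wm_tendsto_DG {c : ℝ} (hc0 : 0 < c) (hc1 : c < 1) :
    Filter.Tendsto (fun δ => c * (1 - c) * (Real.exp δ - 1) / (c * Real.exp δ - c + 1))
      Filter.atTop (nhds (1 - c)) := by
  have hA := wm_A_pos hc0 hc1
  have h1 : Filter.Tendsto (fun δ => c * Real.exp δ - c + 1) Filter.atTop Filter.atTop := by
    have h2 := Real.tendsto_exp_atTop.const_mul_atTop hc0
    have h3 := Filter.tendsto_atTop_add_const_right Filter.atTop (1 - c) h2
    have : (fun δ => c * Real.exp δ - c + 1) = fun δ => c * Real.exp δ + (1 - c) := by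
      funext δ; ring
    rw [this]; exact h3
  have h2 : Filter.Tendsto (fun δ => (1 - c) - (1 - c) * (c * Real.exp δ - c + 1)⁻¹)
      Filter.atTop (nhds (1 - c)) := by
    have := (h1.inv_tendsto_atTop).const_mul (1 - c)
    simpa using tendsto_const_nhds.sub this
  have heq : (fun δ => c * (1 - c) * (Real.exp δ - 1) / (c * Real.exp δ - c + 1))
      = fun δ => (1 - c) - (1 - c) * (c * Real.exp δ - c + 1)⁻¹ := by
    funext δ
    have := hA δ
    rw [eq_sub_iff_add_eq, ← div_eq_mul_inv, ← add_div, div_eq_iff this.ne']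
    ring
  rw [heq]; exact h2

/-- Strong duality for the single-`δ` watermarking problem: the primal optimal
value (minimal average KL subject to the average DG constraint) equals the
supremum of the Lagrangian dual `g` over `λ ≥ 0`, and the primal optimizer
equals the dual optimizer. -/
theorem single_delta_strong_duality (T : ℕ) (hT : 0 < T)
    (G : Fin T → ℝ) (hG0 : ∀ t, 0 < G t) (hG1 : ∀ t, G t < 1)
    (Δ : ℝ) (hΔ0 : 0 < Δ)
    (hfeas : Δ < (1 / (T : ℝ)) * ∑ t, (1 - G t)) :
    let DG : Fin T → ℝ → ℝ := fun t δ =>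
      G t * (1 - G t) * (Real.exp δ - 1) / (G t * Real.exp δ - G t + 1)
    let Dkl : Fin T → ℝ → ℝ := fun t δ =>
      G t * δ * Real.exp δ / (G t * Real.exp δ - G t + 1) -
        Real.log (G t * Real.exp δ - G t + 1)
    let obj : ℝ → ℝ := fun δ => (1 / (T : ℝ)) * ∑ t, Dkl t δ
    let Feasible : ℝ → Prop := fun δ => Δ ≤ (1 / (T : ℝ)) * ∑ t, DG t δ
    let g : ℝ → ℝ := fun lam =>
      (1 / (T : ℝ)) * ∑ t, ((G t + Δ) * lam -
        Real.log (G t * Real.exp lam - G t + 1))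
    ∃ δstar lamstar : ℝ,
      (Feasible δstar ∧ ∀ δ, Feasible δ → obj δstar ≤ obj δ) ∧
      (0 ≤ lamstar ∧ ∀ lam, 0 ≤ lam → g lam ≤ g lamstar) ∧
      obj δstar = g lamstar ∧ δstar = lamstar := by
  intro DG Dkl obj Feasible g
  have hT' : (0:ℝ) < T := Nat.cast_pos.mpr hT
  have hNE : Nonempty (Fin T) := ⟨⟨0, hT⟩⟩
  have hA : ∀ t (δ : ℝ), 0 < G t * Real.exp δ - G t + 1 :=
    fun t δ => wm_A_pos (hG0 t) (hG1 t) δ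
  -- the (unnormalized) constraint function H = ∑ DG
  have hHd : ∀ δ : ℝ, HasDerivAt (fun x => ∑ t, DG t x)
      (∑ t, G t * (1 - G t) * Real.exp δ / (G t * Real.exp δ - G t + 1) ^ 2) δ :=
    fun δ => HasDerivAt.fun_sum (fun t _ => wm_hasDerivAt_DG (hG0 t) (hG1 t) δ)
  have hHdiff : Differentiable ℝ (fun x => ∑ t, DG t x) :=
    fun δ => (hHd δ).differentiableAt
  have hHmono : StrictMono (fun x => ∑ t, DG t x) := by
    apply strictMono_of_deriv_pos
    intro δ
    rw [(hHd δ).deriv]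
    apply Finset.sum_pos (fun t _ => ?_) Finset.univ_nonempty
    exact div_pos (mul_pos (mul_pos (hG0 t) (by linarith [hG1 t])) (Real.exp_pos δ))
      (pow_pos (hA t δ) 2)
  have hH0 : (∑ t, DG t (0:ℝ)) = 0 :=
    Finset.sum_eq_zero fun t _ => by simp [DG, Real.exp_zero]
  -- feasibility bound
  have hTS : Δ * T < ∑ t, (1 - G t) := by
    have h1 := mul_lt_mul_of_pos_right hfeas hT'
    have h2 : (1 / (T:ℝ) * ∑ t, (1 - G t)) * T = ∑ t, (1 - G t) := by
      field_simp
    linarith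
  -- H tends to ∑ (1 - G t) at infinity, hence exceeds Δ*T somewhere
  have hHtend : Filter.Tendsto (fun x => ∑ t, DG t x) Filter.atTop
      (nhds (∑ t, (1 - G t))) :=
    tendsto_finset_sum _ fun t _ => wm_tendsto_DG (hG0 t) (hG1 t)
  obtain ⟨M, hM⟩ : ∃ M : ℝ, Δ * T < ∑ t, DG t M :=
    (hHtend.eventually (eventually_gt_nhds hTS)).exists
  have hΔT : (0:ℝ) < Δ * T := mul_pos hΔ0 hT'
  have hM0 : (0:ℝ) < M := by
    by_contra hle
    push_neg at hle
    have := hHmono.le_iff_le.mpr hle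
    simp only [hH0] at this
    linarith
  -- intermediate value: find δstar with ∑ DG t δstar = Δ * T
  obtain ⟨δstar, hδmem, hHδ⟩ : ∃ δstar ∈ Set.Icc (0:ℝ) M, (∑ t, DG t δstar) = Δ * T := by
    have := intermediate_value_Icc hM0.le (hHdiff.continuous.continuousOn
      (s := Set.Icc (0:ℝ) M))
    have hmem : Δ * T ∈ Set.Icc ((fun x => ∑ t, DG t x) 0) ((fun x => ∑ t, DG t x) M) := by
      constructor
      · simp only [hH0]; exact hΔT.le
      · exact hM.le
    obtain ⟨x, hx, hx2⟩ := this hmem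
    exact ⟨x, hx, hx2⟩
  have hδpos : 0 < δstar := by
    have : (fun x => ∑ t, DG t x) 0 < (fun x => ∑ t, DG t x) δstar := by
      simp only [hH0, hHδ]; exact hΔT
    exact hHmono.lt_iff_lt.mp this
  -- δstar is feasible
  have hFeas : Feasible δstar := by
    show Δ ≤ (1 / (T:ℝ)) * ∑ t, DG t δstar
    rw [hHδ]
    rw [one_div, inv_mul_eq_div, mul_div_assoc, div_self hT'.ne', mul_one]
  -- any feasible δ satisfies δstar ≤ δ
  have hFeas_ge : ∀ δ, Feasible δ → δstar ≤ δ := by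
    intro δ hδ
    have h1 : Δ * T ≤ ∑ t, DG t δ := by
      have := mul_le_mul_of_nonneg_right hδ hT'.le
      have h2 : (1 / (T:ℝ) * ∑ t, DG t δ) * T = ∑ t, DG t δ := by field_simp
      linarith
    have : (fun x => ∑ t, DG t x) δstar ≤ (fun x => ∑ t, DG t x) δ := by
      simp only [hHδ]; exact h1
    exact hHmono.le_iff_le.mp this
  -- objective sum is monotone on [0, ∞)
  have hKd : ∀ δ : ℝ, HasDerivAt (fun x => ∑ t, Dkl t x)
      (∑ t, δ * (G t * (1 - G t) * Real.exp δ / (G t * Real.exp δ - G t + 1) ^ 2)) δ :=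
    fun δ => HasDerivAt.fun_sum (fun t _ => wm_hasDerivAt_Dkl (hG0 t) (hG1 t) δ)
  have hKdiff : Differentiable ℝ (fun x => ∑ t, Dkl t x) :=
    fun δ => (hKd δ).differentiableAt
  have hKmono : MonotoneOn (fun x => ∑ t, Dkl t x) (Set.Ici 0) := by
    apply monotoneOn_of_deriv_nonneg (convex_Ici 0) hKdiff.continuous.continuousOn
      (hKdiff.differentiableOn)
    intro x hx
    rw [interior_Ici] at hx
    rw [(hKd x).deriv]
    apply Finset.sum_nonneg
    intro t _
    have hx0 : 0 < x := hx
    have h1 : (0:ℝ) < 1 - G t := by linarith [hG1 t]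
    have h2 : 0 < G t * (1 - G t) * Real.exp x / (G t * Real.exp x - G t + 1) ^ 2 :=
      div_pos (mul_pos (mul_pos (hG0 t) h1) (Real.exp_pos x)) (pow_pos (hA t x) 2)
    exact mul_nonneg hx0.le h2.le
  -- primal optimality
  have hPrimal : ∀ δ, Feasible δ → obj δstar ≤ obj δ := by
    intro δ hδ
    have hle := hFeas_ge δ hδ
    have h1 : (∑ t, Dkl t δstar) ≤ ∑ t, Dkl t δ :=
      hKmono (Set.mem_Ici.mpr hδpos.le) (Set.mem_Ici.mpr (hδpos.le.trans hle)) hle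
    have h1T : (1:ℝ)/T ≥ 0 := by positivity
    exact mul_le_mul_of_nonneg_left h1 h1T
  -- dual function: derivative of the sum is Δ*T - ∑ DG
  have hGd : ∀ lam : ℝ, HasDerivAt
      (fun x => ∑ t, ((G t + Δ) * x - Real.log (G t * Real.exp x - G t + 1)))
      (∑ t, (Δ - DG t lam)) lam :=
    fun lam => HasDerivAt.fun_sum (fun t _ => wm_hasDerivAt_gterm (hG0 t) (hG1 t) Δ lam)
  have hGsum : ∀ lam : ℝ, (∑ t, (Δ - DG t lam)) = Δ * T - ∑ t, DG t lam := by
    intro lam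
    rw [Finset.sum_sub_distrib, Finset.sum_const, Finset.card_univ, Fintype.card_fin,
      nsmul_eq_mul, mul_comm]
  have hGdiff : Differentiable ℝ
      (fun x => ∑ t, ((G t + Δ) * x - Real.log (G t * Real.exp x - G t + 1))) :=
    fun lam => (hGd lam).differentiableAt
  -- dual optimality at δstar
  have hDualMax : ∀ lam, 0 ≤ lam →
      (∑ t, ((G t + Δ) * lam - Real.log (G t * Real.exp lam - G t + 1))) ≤
      (∑ t, ((G t + Δ) * δstar - Real.log (G t * Real.exp δstar - G t + 1))) := by
    have hmonoG : MonotoneOn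
        (fun x => ∑ t, ((G t + Δ) * x - Real.log (G t * Real.exp x - G t + 1)))
        (Set.Icc 0 δstar) := by
      apply monotoneOn_of_deriv_nonneg (convex_Icc 0 δstar)
        hGdiff.continuous.continuousOn hGdiff.differentiableOn
      intro x hx
      rw [interior_Icc] at hx
      rw [(hGd x).deriv, hGsum x]
      have : (fun y => ∑ t, DG t y) x ≤ (fun y => ∑ t, DG t y) δstar :=
        hHmono.le_iff_le.mpr hx.2.le
      simp only [hHδ] at this
      linarith
    have hantiG : AntitoneOn
        (fun x => ∑ t, ((G t + Δ) * x - Real.log (G t * Real.exp x - G t + 1)))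
        (Set.Ici δstar) := by
      apply antitoneOn_of_deriv_nonpos (convex_Ici δstar)
        hGdiff.continuous.continuousOn hGdiff.differentiableOn
      intro x hx
      rw [interior_Ici] at hx
      rw [(hGd x).deriv, hGsum x]
      have : (fun y => ∑ t, DG t y) δstar ≤ (fun y => ∑ t, DG t y) x :=
        hHmono.le_iff_le.mpr (le_of_lt hx)
      simp only [hHδ] at this
      linarith
    intro lam hlam
    rcases le_total lam δstar with h | h
    · exact hmonoG (Set.mem_Icc.mpr ⟨hlam, h⟩) (Set.mem_Icc.mpr ⟨hδpos.le, le_refl _⟩) h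
    · exact hantiG (Set.mem_Ici.mpr (le_refl _)) (Set.mem_Ici.mpr h) h
  have hDual : ∀ lam, 0 ≤ lam → g lam ≤ g δstar := by
    intro lam hlam
    have h1T : (1:ℝ)/T ≥ 0 := by positivity
    exact mul_le_mul_of_nonneg_left (hDualMax lam hlam) h1T
  -- strong duality: obj δstar = g δstar
  have hEq : obj δstar = g δstar := by
    show (1 / (T:ℝ)) * ∑ t, Dkl t δstar = (1 / (T:ℝ)) * ∑ t,
      ((G t + Δ) * δstar - Real.log (G t * Real.exp δstar - G t + 1))
    congr 1
    have hterm : ∀ t : Fin T, Dkl t δstar =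
        ((G t + Δ) * δstar - Real.log (G t * Real.exp δstar - G t + 1))
          + δstar * (DG t δstar - Δ) :=
      fun t => wm_Dkl_eq (hG0 t) (hG1 t) Δ δstar
    rw [Finset.sum_congr rfl (fun t _ => hterm t), Finset.sum_add_distrib,
      ← Finset.mul_sum]
    rw [show (∑ t, (DG t δstar - Δ)) = 0 by
      rw [Finset.sum_sub_distrib, hHδ, Finset.sum_const, Finset.card_univ,
        Fintype.card_fin, nsmul_eq_mul]; ring]
    ring
  exact ⟨δstar, δstar, ⟨hFeas, hPrimal⟩, ⟨hδpos.le, hDual⟩, hEq, rfl⟩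
end

section
/- Fix Δ ∈ (0,1) and consider γ ∈ (0, 1−Δ). The minimal KL distortion achieving average green probability increase Δ at green ratio γ is K(γ) = (Δ+γ)[log(γ+Δ) − log γ] + (1−Δ−γ)[log(1−γ−Δ) − log(1−γ)]. Then K is strictly convex in γ: its second derivative equals Δ²/(γ²(γ+Δ)) + Δ²/((1−γ)²(1−γ−Δ)) > 0, so the optimal green ratio γ* is the unique solution of −Δ/γ − Δ/(1−γ) + log((γ+Δ)/γ) − log((1−γ−Δ)/(1−γ)) = 0 whenever a critical point exists. -/
open Real Set

/-- The certainty-equivalent minimal distortion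
`K(γ) = (Δ+γ)[log(γ+Δ) − log γ] + (1−Δ−γ)[log(1−γ−Δ) − log(1−γ)]` is strictly
convex in `γ` on `(0, 1−Δ)`: its first derivative is
`K'(γ) = −Δ/γ − Δ/(1−γ) + log(γ+Δ) − log γ − log(1−γ−Δ) + log(1−γ)`, its
second derivative equals `Δ²/(γ²(γ+Δ)) + Δ²/((1−γ)²(1−γ−Δ)) > 0`, and hence
any two critical points of `K'` in `(0, 1−Δ)` coincide. -/
theorem certainty_equivalent_gamma_convex (Δ : ℝ) (hΔ0 : 0 < Δ) (hΔ1 : Δ < 1) :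
    let K : ℝ → ℝ := fun γ =>
      (Δ + γ) * (Real.log (γ + Δ) - Real.log γ) +
        (1 - Δ - γ) * (Real.log (1 - γ - Δ) - Real.log (1 - γ))
    let K' : ℝ → ℝ := fun γ =>
      -Δ / γ - Δ / (1 - γ) + Real.log (γ + Δ) - Real.log γ -
        Real.log (1 - γ - Δ) + Real.log (1 - γ)
    (∀ γ ∈ Ioo (0 : ℝ) (1 - Δ), HasDerivAt K (K' γ) γ) ∧
    (∀ γ ∈ Ioo (0 : ℝ) (1 - Δ),
      HasDerivAt K'
        (Δ ^ 2 / (γ ^ 2 * (γ + Δ)) + Δ ^ 2 / ((1 - γ) ^ 2 * (1 - γ - Δ))) γ ∧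
      0 < Δ ^ 2 / (γ ^ 2 * (γ + Δ)) + Δ ^ 2 / ((1 - γ) ^ 2 * (1 - γ - Δ))) ∧
    StrictConvexOn ℝ (Ioo (0 : ℝ) (1 - Δ)) K ∧
    (∀ γ₁ ∈ Ioo (0 : ℝ) (1 - Δ), ∀ γ₂ ∈ Ioo (0 : ℝ) (1 - Δ),
      K' γ₁ = 0 → K' γ₂ = 0 → γ₁ = γ₂) := by
  intro K K'
  -- basic positivity facts
  have hfacts : ∀ γ ∈ Ioo (0 : ℝ) (1 - Δ),
      0 < γ ∧ 0 < γ + Δ ∧ 0 < 1 - γ ∧ 0 < 1 - γ - Δ := by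
    rintro γ ⟨h1, h2⟩
    refine ⟨h1, by linarith, by linarith, by linarith⟩
  -- first derivative
  have hK : ∀ γ ∈ Ioo (0 : ℝ) (1 - Δ), HasDerivAt K (K' γ) γ := by
    intro γ hγ
    obtain ⟨hγ0, hγΔ, h1γ, h1γΔ⟩ := hfacts γ hγ
    have h1 : HasDerivAt (fun x : ℝ => Δ + x) 1 γ := by
      simpa using (hasDerivAt_id γ).const_add Δ
    have h2 : HasDerivAt (fun x : ℝ => Real.log (x + Δ) - Real.log x)
        (1 / (γ + Δ) - 1 / γ) γ := by
      have ha : HasDerivAt (fun x : ℝ => Real.log (x + Δ)) (1 / (γ + Δ)) γ := by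
        have := ((hasDerivAt_id γ).add_const Δ).log (ne_of_gt hγΔ)
        simpa using this
      have hb : HasDerivAt Real.log (1 / γ) γ := by
        simpa [one_div] using Real.hasDerivAt_log (ne_of_gt hγ0)
      exact ha.sub hb
    have h3 : HasDerivAt (fun x : ℝ => 1 - Δ - x) (-1) γ := by
      simpa using ((hasDerivAt_id γ).const_sub (1 - Δ))
    have h4 : HasDerivAt (fun x : ℝ => Real.log (1 - x - Δ) - Real.log (1 - x))
        ((-1) / (1 - γ - Δ) - (-1) / (1 - γ)) γ := by
      have ha : HasDerivAt (fun x : ℝ => Real.log (1 - x - Δ)) ((-1) / (1 - γ - Δ)) γ := by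
        have hd : HasDerivAt (fun x : ℝ => 1 - x - Δ) (-1) γ := by
          simpa using (((hasDerivAt_id γ).const_sub 1).sub_const Δ)
        exact hd.log (ne_of_gt h1γΔ)
      have hb : HasDerivAt (fun x : ℝ => Real.log (1 - x)) ((-1) / (1 - γ)) γ := by
        have hd : HasDerivAt (fun x : ℝ => 1 - x) (-1) γ := by
          simpa using ((hasDerivAt_id γ).const_sub 1)
        exact hd.log (ne_of_gt h1γ)
      exact ha.sub hb
    have h := (h1.mul h2).add (h3.mul h4)
    refine h.congr_deriv ?_; symm
    show K' γ = _
    simp only [K']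
    have n1 : γ ≠ 0 := ne_of_gt hγ0
    have n2 : γ + Δ ≠ 0 := ne_of_gt hγΔ
    have n3 : (1 : ℝ) - γ ≠ 0 := ne_of_gt h1γ
    have n4 : (1 : ℝ) - γ - Δ ≠ 0 := ne_of_gt h1γΔ
    field_simp
    ring
  -- second derivative
  have hK2 : ∀ γ ∈ Ioo (0 : ℝ) (1 - Δ), HasDerivAt K'
      (Δ ^ 2 / (γ ^ 2 * (γ + Δ)) + Δ ^ 2 / ((1 - γ) ^ 2 * (1 - γ - Δ))) γ := by
    intro γ hγ
    obtain ⟨hγ0, hγΔ, h1γ, h1γΔ⟩ := hfacts γ hγ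
    have ha : HasDerivAt (fun x : ℝ => -Δ / x) (Δ / γ ^ 2) γ := by
      have := (hasDerivAt_const γ (-Δ)).div (hasDerivAt_id γ) (ne_of_gt hγ0)
      refine this.congr_deriv ?_
      simp
    have hb : HasDerivAt (fun x : ℝ => Δ / (1 - x)) (Δ / (1 - γ) ^ 2) γ := by
      have hd : HasDerivAt (fun x : ℝ => 1 - x) (-1) γ := by
        simpa using ((hasDerivAt_id γ).const_sub 1)
      have := (hasDerivAt_const γ Δ).div hd (ne_of_gt h1γ)
      refine this.congr_deriv ?_
      simp
    have hc : HasDerivAt (fun x : ℝ => Real.log (x + Δ)) (1 / (γ + Δ)) γ := by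
      have := ((hasDerivAt_id γ).add_const Δ).log (ne_of_gt hγΔ)
      simpa using this
    have hd : HasDerivAt Real.log (1 / γ) γ := by
      simpa [one_div] using Real.hasDerivAt_log (ne_of_gt hγ0)
    have he : HasDerivAt (fun x : ℝ => Real.log (1 - x - Δ)) ((-1) / (1 - γ - Δ)) γ := by
      have hdd : HasDerivAt (fun x : ℝ => 1 - x - Δ) (-1) γ := by
        simpa using (((hasDerivAt_id γ).const_sub 1).sub_const Δ)
      exact hdd.log (ne_of_gt h1γΔ)
    have hf : HasDerivAt (fun x : ℝ => Real.log (1 - x)) ((-1) / (1 - γ)) γ := by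
      have hdd : HasDerivAt (fun x : ℝ => 1 - x) (-1) γ := by
        simpa using ((hasDerivAt_id γ).const_sub 1)
      exact hdd.log (ne_of_gt h1γ)
    have h := ((((ha.sub hb).add hc).sub hd).sub he).add hf
    refine h.congr_deriv ?_
    have n1 : γ ≠ 0 := ne_of_gt hγ0
    have n2 : γ + Δ ≠ 0 := ne_of_gt hγΔ
    have n3 : (1 : ℝ) - γ ≠ 0 := ne_of_gt h1γ
    have n4 : (1 : ℝ) - γ - Δ ≠ 0 := ne_of_gt h1γΔ
    field_simp
    ring
  have hpos : ∀ γ ∈ Ioo (0 : ℝ) (1 - Δ),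
      0 < Δ ^ 2 / (γ ^ 2 * (γ + Δ)) + Δ ^ 2 / ((1 - γ) ^ 2 * (1 - γ - Δ)) := by
    intro γ hγ
    obtain ⟨hγ0, hγΔ, h1γ, h1γΔ⟩ := hfacts γ hγ
    positivity
  -- deriv identities on the open interval
  have hopen : IsOpen (Ioo (0 : ℝ) (1 - Δ)) := isOpen_Ioo
  have hderiv1 : ∀ γ ∈ Ioo (0 : ℝ) (1 - Δ), deriv K γ = K' γ :=
    fun γ hγ => (hK γ hγ).deriv
  have hderiv2 : ∀ γ ∈ Ioo (0 : ℝ) (1 - Δ), deriv (deriv K) γ =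
      Δ ^ 2 / (γ ^ 2 * (γ + Δ)) + Δ ^ 2 / ((1 - γ) ^ 2 * (1 - γ - Δ)) := by
    intro γ hγ
    have heq : deriv K =ᶠ[nhds γ] K' :=
      Filter.eventuallyEq_of_mem (hopen.mem_nhds hγ) hderiv1
    rw [heq.deriv_eq]
    exact (hK2 γ hγ).deriv
  have hcontK : ContinuousOn K (Ioo (0 : ℝ) (1 - Δ)) :=
    fun γ hγ => ((hK γ hγ).continuousAt).continuousWithinAt
  have hconv : StrictConvexOn ℝ (Ioo (0 : ℝ) (1 - Δ)) K := by
    apply strictConvexOn_of_deriv2_pos (convex_Ioo _ _) hcontK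
    intro γ hγ
    rw [hopen.interior_eq] at hγ
    have : deriv^[2] K γ = deriv (deriv K) γ := by
      simp [Function.iterate_succ, Function.iterate_one]
    rw [this, hderiv2 γ hγ]
    exact hpos γ hγ
  refine ⟨hK, fun γ hγ => ⟨hK2 γ hγ, hpos γ hγ⟩, hconv, ?_⟩
  -- uniqueness of critical points: K' is strictly monotone
  have hmono : StrictMonoOn K' (Ioo (0 : ℝ) (1 - Δ)) := by
    apply strictMonoOn_of_deriv_pos (convex_Ioo _ _)
    · exact fun γ hγ => ((hK2 γ hγ).continuousAt).continuousWithinAt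
    · intro γ hγ
      rw [hopen.interior_eq] at hγ
      rw [(hK2 γ hγ).deriv]
      exact hpos γ hγ
  intro γ₁ h₁ γ₂ h₂ e₁ e₂
  exact hmono.injOn h₁ h₂ (by rw [e₁, e₂])
end
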